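/- Let n, d, l ≥ 1, let U ⊆ ℝ^l be a nonempty set, let k > 0 and c ∈ ℝ. Let b : ℝ^n × U → ℝ^n and σ : ℝ^n × U → ℝ^{n×d} be continuously differentiable in the state variable x for every fixed u ∈ U. If the differential joint dissipativity condition ⟨D_x b(x,u) y, y⟩ + k ‖D_x σ(x,u) y‖₂² ≤ c |y|² holds for all x, y ∈ ℝ^n and u ∈ U, then the integrated joint dissipativity condition ⟨b(x,u) − b(y,u), x − y⟩ + k ‖σ(x,u) − σ(y,u)‖₂² ≤ c |x − y|² holds for all x, y ∈ ℝ^n and u ∈ U. -/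

import Mathlib

open scoped RealInnerProductSpace

/-- the differential joint dissipativity condition implies the
integrated joint dissipativity condition.  Here `ℝ^n` is `EuclideanSpace ℝ (Fin n)`
and `n × d` matrices with the Hilbert–Schmidt (Frobenius) norm are modelled by
`EuclideanSpace ℝ (Fin n × Fin d)` (the Euclidean norm of the entries). -/
theorem stmt_0 (n d l : ℕ) (hn : 1 ≤ n) (hd : 1 ≤ d) (hl : 1 ≤ l)
    (U : Set (EuclideanSpace ℝ (Fin l))) (hU : U.Nonempty)
    (k c : ℝ) (hk : 0 < k)
    (b : EuclideanSpace ℝ (Fin n) → EuclideanSpace ℝ (Fin l) → EuclideanSpace ℝ (Fin n))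
    (σ : EuclideanSpace ℝ (Fin n) → EuclideanSpace ℝ (Fin l) →
      EuclideanSpace ℝ (Fin n × Fin d))
    (hb : ∀ u ∈ U, ContDiff ℝ 1 (fun x => b x u))
    (hσ : ∀ u ∈ U, ContDiff ℝ 1 (fun x => σ x u))
    (hdiss : ∀ u ∈ U, ∀ x y : EuclideanSpace ℝ (Fin n),
      ⟪fderiv ℝ (fun z => b z u) x y, y⟫
        + k * ‖fderiv ℝ (fun z => σ z u) x y‖ ^ 2 ≤ c * ‖y‖ ^ 2) :
    ∀ u ∈ U, ∀ x y : EuclideanSpace ℝ (Fin n),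
      ⟪b x u - b y u, x - y⟫ + k * ‖σ x u - σ y u‖ ^ 2 ≤ c * ‖x - y‖ ^ 2 := by
  intro u hu x y
  set v : EuclideanSpace ℝ (Fin n) := x - y with hv
  set γ : ℝ → EuclideanSpace ℝ (Fin n) := fun t => y + t • v with hγ
  have hγcont : Continuous γ := by fun_prop
  have hγd : ∀ t : ℝ, HasDerivAt γ v t := fun t => by
    simpa [hγ] using ((hasDerivAt_id t).smul_const v).const_add y
  have hγ0 : γ 0 = y := by simp [hγ]
  have hγ1 : γ 1 = x := by simp [hγ, hv]
  have hbC := hb u hu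
  have hσC := hσ u hu
  set Fb : ℝ → EuclideanSpace ℝ (Fin n) :=
    fun t => fderiv ℝ (fun z => b z u) (γ t) v with hFb
  set Fσ : ℝ → EuclideanSpace ℝ (Fin n × Fin d) :=
    fun t => fderiv ℝ (fun z => σ z u) (γ t) v with hFσ
  have hFbc : Continuous Fb :=
    ((hbC.continuous_fderiv one_ne_zero).comp hγcont).clm_apply continuous_const
  have hFσc : Continuous Fσ :=
    ((hσC.continuous_fderiv one_ne_zero).comp hγcont).clm_apply continuous_const
  have hbder : ∀ t ∈ Set.uIcc (0:ℝ) 1, HasDerivAt (fun t => b (γ t) u) (Fb t) t := fun t _ =>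
    ((hbC.differentiable one_ne_zero (γ t)).hasFDerivAt).comp_hasDerivAt t (hγd t)
  have hσder : ∀ t ∈ Set.uIcc (0:ℝ) 1, HasDerivAt (fun t => σ (γ t) u) (Fσ t) t := fun t _ =>
    ((hσC.differentiable one_ne_zero (γ t)).hasFDerivAt).comp_hasDerivAt t (hγd t)
  have hbint : b x u - b y u = ∫ t in (0:ℝ)..1, Fb t := by
    rw [← hγ1, ← hγ0]
    exact (intervalIntegral.integral_eq_sub_of_hasDerivAt hbder
      (hFbc.intervalIntegrable 0 1)).symm
  have hσint : σ x u - σ y u = ∫ t in (0:ℝ)..1, Fσ t := by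
    rw [← hγ1, ← hγ0]
    exact (intervalIntegral.integral_eq_sub_of_hasDerivAt hσder
      (hFσc.intervalIntegrable 0 1)).symm
  have hswap : ∀ {E : Type} [inst : NormedAddCommGroup E] [inst2 : InnerProductSpace ℝ E]
      [CompleteSpace E] (F : ℝ → E) (hF : Continuous F) (w : E),
      ⟪∫ t in (0:ℝ)..1, F t, w⟫ = ∫ t in (0:ℝ)..1, ⟪F t, w⟫ := by
    intro E _ _ _ F hF w
    exact (((innerSL ℝ (E := E)).flip w).intervalIntegral_comp_comm
      (μ := MeasureTheory.volume) (hF.intervalIntegrable 0 1)).symm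
  have hbinner : ⟪b x u - b y u, v⟫ = ∫ t in (0:ℝ)..1, ⟪Fb t, v⟫ := by
    rw [hbint]; exact hswap Fb hFbc v
  set S : EuclideanSpace ℝ (Fin n × Fin d) := σ x u - σ y u with hS
  have hσsq : ‖S‖ ^ 2 ≤ ∫ t in (0:ℝ)..1, ‖Fσ t‖ ^ 2 := by
    have h1 : ‖S‖ ^ 2 = ∫ t in (0:ℝ)..1, ⟪Fσ t, S⟫ := by
      rw [← real_inner_self_eq_norm_sq]
      nth_rewrite 1 [hσint]
      exact hswap Fσ hFσc S
    have h2 : (∫ t in (0:ℝ)..1, ⟪Fσ t, S⟫) ≤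
        ∫ t in (0:ℝ)..1, (‖Fσ t‖ ^ 2 / 2 + ‖S‖ ^ 2 / 2) := by
      apply intervalIntegral.integral_mono_on (by norm_num)
        ((hFσc.inner continuous_const).intervalIntegrable 0 1)
        ((show Continuous fun t => ‖Fσ t‖ ^ 2 / 2 + ‖S‖ ^ 2 / 2 from ((show Continuous fun t => ‖Fσ t‖ ^ 2 from hFσc.norm.pow 2).div_const 2).add continuous_const).intervalIntegrable 0 1)
      intro t _
      have h := real_inner_le_norm (Fσ t) S
      nlinarith [sq_nonneg (‖Fσ t‖ - ‖S‖)]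
    have h3 : (∫ t in (0:ℝ)..1, (‖Fσ t‖ ^ 2 / 2 + ‖S‖ ^ 2 / 2))
        = (∫ t in (0:ℝ)..1, ‖Fσ t‖ ^ 2) / 2 + ‖S‖ ^ 2 / 2 := by
      rw [intervalIntegral.integral_add
        (((show Continuous fun t => ‖Fσ t‖ ^ 2 from hFσc.norm.pow 2).div_const 2).intervalIntegrable 0 1)
        (intervalIntegrable_const), intervalIntegral.integral_div,
        intervalIntegral.integral_const]
      simp
    rw [h3] at h2
    linarith [h1, h2]
  have hki : (∫ t in (0:ℝ)..1, ⟪Fb t, v⟫) + k * ∫ t in (0:ℝ)..1, ‖Fσ t‖ ^ 2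
      = ∫ t in (0:ℝ)..1, (⟪Fb t, v⟫ + k * ‖Fσ t‖ ^ 2) := by
    rw [intervalIntegral.integral_add
      ((hFbc.inner continuous_const).intervalIntegrable 0 1)
      ((show Continuous fun t => k * ‖Fσ t‖ ^ 2 from continuous_const.mul (show Continuous fun t => ‖Fσ t‖ ^ 2 from hFσc.norm.pow 2)).intervalIntegrable 0 1),
      intervalIntegral.integral_const_mul]
  have hmono : (∫ t in (0:ℝ)..1, (⟪Fb t, v⟫ + k * ‖Fσ t‖ ^ 2))
      ≤ ∫ t in (0:ℝ)..1, c * ‖v‖ ^ 2 := by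
    apply intervalIntegral.integral_mono_on (by norm_num)
      (((hFbc.inner continuous_const).add
        (continuous_const.mul (hFσc.norm.pow 2))).intervalIntegrable 0 1)
      (intervalIntegrable_const)
    intro t _
    exact hdiss u hu (γ t) v
  have hconst : (∫ t in (0:ℝ)..1, c * ‖v‖ ^ 2) = c * ‖v‖ ^ 2 := by
    rw [intervalIntegral.integral_const]; simp
  have hkσ : k * ‖S‖ ^ 2 ≤ k * ∫ t in (0:ℝ)..1, ‖Fσ t‖ ^ 2 :=
    mul_le_mul_of_nonneg_left hσsq hk.le
  calc ⟪b x u - b y u, v⟫ + k * ‖S‖ ^ 2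
      ≤ (∫ t in (0:ℝ)..1, ⟪Fb t, v⟫) + k * ∫ t in (0:ℝ)..1, ‖Fσ t‖ ^ 2 := by
        rw [hbinner]; linarith
    _ = ∫ t in (0:ℝ)..1, (⟪Fb t, v⟫ + k * ‖Fσ t‖ ^ 2) := hki
    _ ≤ ∫ t in (0:ℝ)..1, c * ‖v‖ ^ 2 := hmono
    _ = c * ‖v‖ ^ 2 := hconst
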